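/- Every nonempty Zariski-closed subset of Spc(K) contains a closed point. -/

import Mathlib

open CategoryTheory CategoryTheory.Limits CategoryTheory.Pretriangulated
open CategoryTheory.MonoidalCategory
open ZeroObject

universe v u

variable (C : Type u) [Category.{v} C] [Preadditive C] [HasZeroObject C]
  [HasShift C ℤ] [∀ n : ℤ, (shiftFunctor C n).Additive] [Pretriangulated C]
  [HasBinaryBiproducts C] [MonoidalCategory C] [SymmetricCategory C]

/-- A thick tensor-ideal: a class of objects closed under isomorphism, containing 0,
satisfying two-out-of-three for distinguished triangles, closed under direct summands,
and closed under tensoring (on either side) with arbitrary objects. -/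
structure IsThickTensorIdeal (J : Set C) : Prop where
  iso_closed : ∀ {a b : C}, (a ≅ b) → a ∈ J → b ∈ J
  zero_mem : (0 : C) ∈ J
  tri₃ : ∀ T : Triangle C, T ∈ (distTriang C) → T.obj₁ ∈ J → T.obj₂ ∈ J → T.obj₃ ∈ J
  tri₂ : ∀ T : Triangle C, T ∈ (distTriang C) → T.obj₁ ∈ J → T.obj₃ ∈ J → T.obj₂ ∈ J
  tri₁ : ∀ T : Triangle C, T ∈ (distTriang C) → T.obj₂ ∈ J → T.obj₃ ∈ J → T.obj₁ ∈ J
  thick : ∀ a b : C, (a ⊞ b) ∈ J → a ∈ J ∧ b ∈ J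
  ideal_right : ∀ a b : C, a ∈ J → a ⊗ b ∈ J
  ideal_left : ∀ a b : C, a ∈ J → b ⊗ a ∈ J

/-- A prime thick tensor-ideal. -/
structure IsPrimeIdeal (P : Set C) extends IsThickTensorIdeal C P : Prop where
  proper : P ≠ Set.univ
  prime : ∀ a b : C, a ⊗ b ∈ P → a ∈ P ∨ b ∈ P

/-- The Balmer spectrum: the set of prime thick tensor-ideals. -/
def SpcK : Type _ := {P : Set C // IsPrimeIdeal C P}

/-- The support of an object. -/
def suppK (a : C) : Set (SpcK C) := {P | a ∉ P.1}

/-- The Zariski topology, generated by the basic open sets U(a) = {P | a ∈ P}. -/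
instance : TopologicalSpace (SpcK C) :=
  TopologicalSpace.generateFrom {U | ∃ a : C, U = {P : SpcK C | a ∈ P.1}}

/-- A tensor-multiplicative collection of objects. -/
def IsMult (S : Set C) : Prop := 𝟙_ C ∈ S ∧ ∀ a ∈ S, ∀ b ∈ S, a ⊗ b ∈ S

/-- The smallest thick tensor-ideal containing `E`. -/
def genIdeal (E : Set C) : Set C := ⋂₀ {J : Set C | IsThickTensorIdeal C J ∧ E ⊆ J}

/-- The n-fold tensor power of an object (with `tpow a 1 = a`). -/
def tpow (a : C) : ℕ → C
  | 0 => 𝟙_ C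
  | 1 => a
  | n+2 => tpow a (n+1) ⊗ a

section Aux

variable {C}

lemma unit_notin_prime {P : Set C} (hP : IsPrimeIdeal C P) : 𝟙_ C ∉ P := by
  intro h
  apply hP.proper
  ext b
  simp only [Set.mem_univ, iff_true]
  exact hP.iso_closed (ρ_ b) (hP.ideal_left _ _ h)

lemma isOpen_upward {U : Set (SpcK C)} (hU : IsOpen U) {Q P : SpcK C}
    (h : Q.1 ⊆ P.1) (hQ : Q ∈ U) : P ∈ U := by
  have hU' : TopologicalSpace.GenerateOpen
      {U | ∃ a : C, U = {P : SpcK C | a ∈ P.1}} U := hU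
  have key : ∀ V, TopologicalSpace.GenerateOpen
      {U | ∃ a : C, U = {P : SpcK C | a ∈ P.1}} V → Q ∈ V → P ∈ V := by
    intro V hV
    induction hV with
    | basic W hW => obtain ⟨a, rfl⟩ := hW; exact fun hQ => h hQ
    | univ => exact fun _ => trivial
    | inter V W _ _ ihV ihW => exact fun hQ => ⟨ihV hQ.1, ihW hQ.2⟩
    | sUnion S _ ih =>
        rintro ⟨V, hVS, hQV⟩
        exact ⟨V, hVS, ih V hVS hQV⟩
  exact key U hU' hQ

lemma mem_of_subset_closed {Z : Set (SpcK C)} (hZ : IsClosed Z) {P Q : SpcK C}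
    (hP : P ∈ Z) (h : Q.1 ⊆ P.1) : Q ∈ Z := by
  by_contra hQ
  exact (isOpen_upward hZ.isOpen_compl h hQ) hP

lemma singleton_closed_of_min {P : SpcK C}
    (hmin : ∀ Q : SpcK C, Q.1 ⊆ P.1 → Q = P) :
    IsClosed ({P} : Set (SpcK C)) := by
  rw [← isOpen_compl_iff]
  have : ({P}ᶜ : Set (SpcK C)) = ⋃ a ∈ (P.1ᶜ : Set C), {R : SpcK C | a ∈ R.1} := by
    ext Q
    simp only [Set.mem_compl_iff, Set.mem_singleton_iff, Set.mem_iUnion, Set.mem_setOf_eq]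
    constructor
    · intro hQ
      by_contra h
      push_neg at h
      exact hQ (hmin Q (fun a haQ => by_contra fun haP => h a haP haQ))
    · rintro ⟨a, haP, haQ⟩ rfl
      exact haP haQ
  rw [this]
  exact isOpen_biUnion fun a _ =>
    TopologicalSpace.isOpen_generateFrom_of_mem ⟨a, rfl⟩

lemma sInter_prime {c : Set (Set C)} (hc : IsChain (· ⊆ ·) c)
    (hne : c.Nonempty) (hall : ∀ J ∈ c, IsPrimeIdeal C J) :
    IsPrimeIdeal C (⋂₀ c) where
  iso_closed := fun e ha => Set.mem_sInter.2 fun J hJ =>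
    (hall J hJ).iso_closed e (Set.mem_sInter.1 ha J hJ)
  zero_mem := Set.mem_sInter.2 fun J hJ => (hall J hJ).zero_mem
  tri₃ := fun T hT h1 h2 => Set.mem_sInter.2 fun J hJ =>
    (hall J hJ).tri₃ T hT (Set.mem_sInter.1 h1 J hJ) (Set.mem_sInter.1 h2 J hJ)
  tri₂ := fun T hT h1 h2 => Set.mem_sInter.2 fun J hJ =>
    (hall J hJ).tri₂ T hT (Set.mem_sInter.1 h1 J hJ) (Set.mem_sInter.1 h2 J hJ)
  tri₁ := fun T hT h1 h2 => Set.mem_sInter.2 fun J hJ =>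
    (hall J hJ).tri₁ T hT (Set.mem_sInter.1 h1 J hJ) (Set.mem_sInter.1 h2 J hJ)
  thick := fun a b h =>
    ⟨Set.mem_sInter.2 fun J hJ => ((hall J hJ).thick a b (Set.mem_sInter.1 h J hJ)).1,
     Set.mem_sInter.2 fun J hJ => ((hall J hJ).thick a b (Set.mem_sInter.1 h J hJ)).2⟩
  ideal_right := fun a b h => Set.mem_sInter.2 fun J hJ =>
    (hall J hJ).ideal_right a b (Set.mem_sInter.1 h J hJ)
  ideal_left := fun a b h => Set.mem_sInter.2 fun J hJ =>
    (hall J hJ).ideal_left a b (Set.mem_sInter.1 h J hJ)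
  proper := by
    obtain ⟨J, hJ⟩ := hne
    intro h
    apply unit_notin_prime (hall J hJ)
    exact Set.mem_sInter.1 (h ▸ Set.mem_univ _) J hJ
  prime := by
    intro a b hab
    by_contra h
    push_neg at h
    obtain ⟨ha, hb⟩ := h
    simp only [Set.mem_sInter, not_forall] at ha hb
    obtain ⟨J₁, hJ₁, ha⟩ := ha
    obtain ⟨J₂, hJ₂, hb⟩ := hb
    rcases hc.total hJ₁ hJ₂ with h12 | h21
    · rcases (hall J₁ hJ₁).prime a b (Set.mem_sInter.1 hab J₁ hJ₁) with h | h
      · exact ha h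
      · exact hb (h12 h)
    · rcases (hall J₂ hJ₂).prime a b (Set.mem_sInter.1 hab J₂ hJ₂) with h | h
      · exact ha (h21 h)
      · exact hb h

end Aux

/-- Corollary 2.12: every nonempty Zariski-closed subset of the spectrum contains
a closed point. -/
theorem closed_subset_has_closed_point (hK : ∃ a : C, ¬ IsZero a)
    (Z : Set (SpcK C)) (hZ : IsClosed Z) (hne : Z.Nonempty) :
    ∃ P ∈ Z, IsClosed ({P} : Set (SpcK C)) := by
  obtain ⟨P₀, hP₀⟩ := hne
  set S : Set (Set C) := {J | ∃ h : IsPrimeIdeal C J, (⟨J, h⟩ : SpcK C) ∈ Z} with hS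
  have hchain : ∀ c ⊆ S, IsChain (· ⊆ ·) c → c.Nonempty →
      ∃ lb ∈ S, ∀ s ∈ c, lb ⊆ s := by
    intro c hcS hc hcne
    have hall : ∀ J ∈ c, IsPrimeIdeal C J := fun J hJ => (hcS hJ).choose
    have hprime := sInter_prime hc hcne hall
    obtain ⟨J₀, hJ₀⟩ := hcne
    refine ⟨⋂₀ c, ⟨hprime, ?_⟩, fun s hs => Set.sInter_subset_of_mem hs⟩
    have hZ₀ : (⟨J₀, hall J₀ hJ₀⟩ : SpcK C) ∈ Z := (hcS hJ₀).choose_spec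
    exact mem_of_subset_closed hZ hZ₀ (Set.sInter_subset_of_mem hJ₀)
  have hP₀S : P₀.1 ∈ S := ⟨P₀.2, hP₀⟩
  obtain ⟨m, -, hm⟩ := zorn_superset_nonempty S hchain P₀.1 hP₀S
  obtain ⟨hmP, hmZ⟩ := hm.prop
  refine ⟨⟨m, hmP⟩, hmZ, singleton_closed_of_min ?_⟩
  intro Q hQm
  have hQZ : Q ∈ Z := mem_of_subset_closed hZ (show (⟨m, hmP⟩ : SpcK C) ∈ Z by simpa using hmZ) hQm
  have : Q.1 ∈ S := ⟨Q.2, hQZ⟩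
  exact Subtype.ext (hm.eq_of_le (y := Q.1) this hQm)
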